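/- (Intertwining identity behind the Remark.) Let D ⊆ ℂ be open, let A, F, F⁺, ω̂_{F,F⁺}, Λ : D → Matrix (Fin N) (Fin N) ℂ be real-differentiable, and assume on D: (i) ∂_z̄ F + A·F = 0; (ii) ∂_z̄ ω̂_{F,F⁺} = F⁺·F; (iii) ω̂_{F,F⁺}(z) is invertible for every z ∈ D; (iv) ∂_z̄ Λ = Λ·A + F⁺. Define g = 1 − F · ω̂_{F,F⁺}⁻¹ · Λ and Ã = A + F · ω̂_{F,F⁺}⁻¹ · F⁺. Then g satisfies the intertwining equation ∂_z̄ g + Ã·g − g·A = 0 on D; in particular, wherever g is invertible the transformation A → Ã of Proposition 1 is the gauge transformation Ã = g·A·g⁻¹ − (∂_z̄ g)·g⁻¹. -/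

import Mathlib

open Complex Matrix

/-- Entrywise Wirtinger derivative ∂_z f = (1/2)(∂f/∂x − i ∂f/∂y). -/
noncomputable def wDz {N : ℕ} (f : ℂ → Matrix (Fin N) (Fin N) ℂ) (z : ℂ) :
    Matrix (Fin N) (Fin N) ℂ :=
  Matrix.of fun i j =>
    (1 / 2 : ℂ) * (fderiv ℝ (fun w => f w i j) z 1
      - Complex.I * fderiv ℝ (fun w => f w i j) z Complex.I)

/-- Entrywise Wirtinger derivative ∂_z̄ f = (1/2)(∂f/∂x + i ∂f/∂y). -/
noncomputable def wDzbar {N : ℕ} (f : ℂ → Matrix (Fin N) (Fin N) ℂ) (z : ℂ) :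
    Matrix (Fin N) (Fin N) ℂ :=
  Matrix.of fun i j =>
    (1 / 2 : ℂ) * (fderiv ℝ (fun w => f w i j) z 1
      + Complex.I * fderiv ℝ (fun w => f w i j) z Complex.I)

/-- Real-differentiability, entrywise, at every point of `D`. -/
def MatDiffOn {N : ℕ} (f : ℂ → Matrix (Fin N) (Fin N) ℂ) (D : Set ℂ) : Prop :=
  ∀ z ∈ D, ∀ i j, DifferentiableAt ℝ (fun w => f w i j) z

/-- Entrywise complex conjugate of a matrix. -/
def mconj {N : ℕ} (M : Matrix (Fin N) (Fin N) ℂ) : Matrix (Fin N) (Fin N) ℂ :=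
  M.map (starRingEnd ℂ)

noncomputable def sDzbar (f : ℂ → ℂ) (z : ℂ) : ℂ :=
  (1 / 2 : ℂ) * (fderiv ℝ f z 1 + Complex.I * fderiv ℝ f z Complex.I)

lemma sDzbar_congr {f g : ℂ → ℂ} {z : ℂ} (h : f =ᶠ[nhds z] g) :
    sDzbar f z = sDzbar g z := by
  unfold sDzbar; rw [h.fderiv_eq]

lemma sDzbar_const (c z : ℂ) : sDzbar (fun _ => c) z = 0 := by
  simp [sDzbar, fderiv_const]

lemma sDzbar_mul {f g : ℂ → ℂ} {z : ℂ} (hf : DifferentiableAt ℝ f z)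
    (hg : DifferentiableAt ℝ g z) :
    sDzbar (fun w => f w * g w) z = sDzbar f z * g z + f z * sDzbar g z := by
  unfold sDzbar
  rw [fderiv_fun_mul hf hg]
  simp only [ContinuousLinearMap.add_apply, ContinuousLinearMap.smul_apply, smul_eq_mul]
  ring

lemma sDzbar_sum {ι : Type*} (s : Finset ι) (f : ι → ℂ → ℂ) {z : ℂ}
    (h : ∀ i ∈ s, DifferentiableAt ℝ (f i) z) :
    sDzbar (fun w => ∑ i ∈ s, f i w) z = ∑ i ∈ s, sDzbar (f i) z := by
  unfold sDzbar
  rw [fderiv_fun_sum h]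
  simp only [ContinuousLinearMap.sum_apply]
  rw [Finset.mul_sum, ← Finset.sum_add_distrib, Finset.mul_sum]

lemma sDzbar_const_sub {f : ℂ → ℂ} {z c : ℂ} (hf : DifferentiableAt ℝ f z) :
    sDzbar (fun w => c - f w) z = - sDzbar f z := by
  unfold sDzbar
  have h2 : fderiv ℝ (fun w => c - f w) z = -fderiv ℝ f z := by
    rw [fderiv_fun_sub (differentiableAt_const c) hf]
    simp
  rw [h2]
  simp only [ContinuousLinearMap.neg_apply]
  ring

lemma wDzbar_apply {N : ℕ} (f : ℂ → Matrix (Fin N) (Fin N) ℂ) (z : ℂ) (i j : Fin N) :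
    wDzbar f z i j = sDzbar (fun w => f w i j) z := rfl

lemma wDzbar_congr {N : ℕ} {f g : ℂ → Matrix (Fin N) (Fin N) ℂ} {z : ℂ}
    (h : f =ᶠ[nhds z] g) : wDzbar f z = wDzbar g z := by
  ext i j
  rw [wDzbar_apply, wDzbar_apply]
  exact sDzbar_congr (h.mono fun w hw => congrFun (congrFun hw i) j)

lemma wDzbar_const {N : ℕ} (c : Matrix (Fin N) (Fin N) ℂ) (z : ℂ) :
    wDzbar (fun _ => c) z = 0 := by
  ext i j
  rw [wDzbar_apply]
  exact sDzbar_const _ _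

lemma wDzbar_mul {N : ℕ} {f g : ℂ → Matrix (Fin N) (Fin N) ℂ} {z : ℂ}
    (hf : ∀ i j, DifferentiableAt ℝ (fun w => f w i j) z)
    (hg : ∀ i j, DifferentiableAt ℝ (fun w => g w i j) z) :
    wDzbar (fun w => f w * g w) z = wDzbar f z * g z + f z * wDzbar g z := by
  ext i j
  rw [wDzbar_apply]
  have h1 : (fun w => (f w * g w) i j) = fun w => ∑ k, f w i k * g w k j :=
    funext fun w => Matrix.mul_apply
  rw [h1, sDzbar_sum _ _ (fun k _ => (hf i k).fun_mul (hg k j)),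
    Finset.sum_congr rfl (fun k _ => sDzbar_mul (hf i k) (hg k j)),
    Finset.sum_add_distrib]
  simp only [Matrix.add_apply, Matrix.mul_apply, wDzbar_apply]

lemma wDzbar_one_sub {N : ℕ} {f : ℂ → Matrix (Fin N) (Fin N) ℂ} {z : ℂ}
    (hf : ∀ i j, DifferentiableAt ℝ (fun w => f w i j) z) :
    wDzbar (fun w => 1 - f w) z = - wDzbar f z := by
  ext i j
  rw [wDzbar_apply]
  have h1 : (fun w => ((1 : Matrix (Fin N) (Fin N) ℂ) - f w) i j)
      = fun w => (1 : Matrix (Fin N) (Fin N) ℂ) i j - f w i j :=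
    funext fun w => by simp [Matrix.sub_apply]
  rw [h1, sDzbar_const_sub (hf i j)]
  simp [wDzbar_apply]

lemma mdiff_mul {N : ℕ} {f g : ℂ → Matrix (Fin N) (Fin N) ℂ} {z : ℂ}
    (hf : ∀ i j, DifferentiableAt ℝ (fun w => f w i j) z)
    (hg : ∀ i j, DifferentiableAt ℝ (fun w => g w i j) z) :
    ∀ i j, DifferentiableAt ℝ (fun w => (f w * g w) i j) z := by
  intro i j
  have h1 : (fun w => (f w * g w) i j) = fun w => ∑ k, f w i k * g w k j :=
    funext fun w => Matrix.mul_apply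
  rw [h1]
  exact DifferentiableAt.fun_sum fun k _ => (hf i k).fun_mul (hg k j)

lemma sdiff_prod {ι : Type*} (s : Finset ι) (f : ι → ℂ → ℂ) {z : ℂ}
    (h : ∀ i ∈ s, DifferentiableAt ℝ (f i) z) :
    DifferentiableAt ℝ (fun w => ∏ i ∈ s, f i w) z := by
  classical
  induction s using Finset.induction with
  | empty => simpa using differentiableAt_const (1 : ℂ)
  | @insert a t hni ih =>
    simp only [Finset.prod_insert hni]
    exact (h a (Finset.mem_insert_self a t)).mul
      (ih fun i hi => h i (Finset.mem_insert_of_mem hi))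

lemma mdiff_det {N : ℕ} {M : ℂ → Matrix (Fin N) (Fin N) ℂ} {z : ℂ}
    (h : ∀ i j, DifferentiableAt ℝ (fun w => M w i j) z) :
    DifferentiableAt ℝ (fun w => (M w).det) z := by
  simp only [Matrix.det_apply']
  refine DifferentiableAt.fun_sum fun σ _ => DifferentiableAt.const_mul ?_ _
  exact sdiff_prod _ _ fun i _ => h (σ i) i

lemma mdiff_inv {N : ℕ} {M : ℂ → Matrix (Fin N) (Fin N) ℂ} {z : ℂ}
    (h : ∀ i j, DifferentiableAt ℝ (fun w => M w i j) z)
    (hdet : (M z).det ≠ 0) :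
    ∀ i j, DifferentiableAt ℝ (fun w => (M w)⁻¹ i j) z := by
  intro i j
  have h1 : (fun w => (M w)⁻¹ i j)
      = fun w => ((M w).det)⁻¹ * ((M w).updateRow j (Pi.single i 1)).det := by
    funext w
    rw [Matrix.inv_def, Matrix.smul_apply, smul_eq_mul, Ring.inverse_eq_inv',
      Matrix.adjugate_apply]
  rw [h1]
  refine ((mdiff_det h).inv hdet).mul (mdiff_det ?_)
  intro i' j'
  by_cases hc : i' = j
  · simpa [Matrix.updateRow_apply, hc] using differentiableAt_const _
  · simpa [Matrix.updateRow_apply, hc] using h i' j'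

/-- intertwining identity: g = 1 − F·ω̂_{F,F⁺}⁻¹·Λ satisfies
∂_z̄ g + Ã·g − g·A = 0, where Ã = A + F·ω̂_{F,F⁺}⁻¹·F⁺; in particular, wherever g
is invertible, Ã = g·A·g⁻¹ − (∂_z̄ g)·g⁻¹. -/
theorem intertwining_identity {N : ℕ} (D : Set ℂ) (hD : IsOpen D)
    (A F Fp ωFF Λ : ℂ → Matrix (Fin N) (Fin N) ℂ)
    (hA : MatDiffOn A D) (hF : MatDiffOn F D) (hFp : MatDiffOn Fp D)
    (hωFF : MatDiffOn ωFF D) (hΛ : MatDiffOn Λ D)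
    (hFsys : ∀ z ∈ D, wDzbar F z + A z * F z = 0)
    (hωFFzbar : ∀ z ∈ D, wDzbar ωFF z = Fp z * F z)
    (hinv : ∀ z ∈ D, IsUnit (ωFF z))
    (hΛsys : ∀ z ∈ D, wDzbar Λ z = Λ z * A z + Fp z) :
    (∀ z ∈ D,
        wDzbar (fun w => 1 - F w * (ωFF w)⁻¹ * Λ w) z
          + (A z + F z * (ωFF z)⁻¹ * Fp z) * (1 - F z * (ωFF z)⁻¹ * Λ z)
          - (1 - F z * (ωFF z)⁻¹ * Λ z) * A z = 0)
      ∧ ∀ z ∈ D, IsUnit (1 - F z * (ωFF z)⁻¹ * Λ z) →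
          A z + F z * (ωFF z)⁻¹ * Fp z
            = (1 - F z * (ωFF z)⁻¹ * Λ z) * A z * (1 - F z * (ωFF z)⁻¹ * Λ z)⁻¹
              - wDzbar (fun w => 1 - F w * (ωFF w)⁻¹ * Λ w) z
                * (1 - F z * (ωFF z)⁻¹ * Λ z)⁻¹ := by
  have key : ∀ z ∈ D,
      wDzbar (fun w => 1 - F w * (ωFF w)⁻¹ * Λ w) z
        + (A z + F z * (ωFF z)⁻¹ * Fp z) * (1 - F z * (ωFF z)⁻¹ * Λ z)
        - (1 - F z * (ωFF z)⁻¹ * Λ z) * A z = 0 := by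
    intro z hz
    have hunit_det : IsUnit (ωFF z).det := (Matrix.isUnit_iff_isUnit_det _).mp (hinv z hz)
    have hdet : (ωFF z).det ≠ 0 := hunit_det.ne_zero
    have hB : ∀ i j, DifferentiableAt ℝ (fun w => (ωFF w)⁻¹ i j) z :=
      mdiff_inv (hωFF z hz) hdet
    have hFB := mdiff_mul (hF z hz) hB
    have hFBΛ := mdiff_mul hFB (hΛ z hz)
    have hEq : (fun w => ωFF w * (ωFF w)⁻¹)
        =ᶠ[nhds z] (fun _ => (1 : Matrix (Fin N) (Fin N) ℂ)) := by
      filter_upwards [hD.mem_nhds hz] with w hw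
      exact Matrix.mul_nonsing_inv _ ((Matrix.isUnit_iff_isUnit_det _).mp (hinv w hw))
    have h0 : wDzbar ωFF z * (ωFF z)⁻¹ + ωFF z * wDzbar (fun w => (ωFF w)⁻¹) z = 0 := by
      rw [← wDzbar_mul (hωFF z hz) hB, wDzbar_congr hEq, wDzbar_const]
    have h1 : ωFF z * wDzbar (fun w => (ωFF w)⁻¹) z = -(Fp z * F z * (ωFF z)⁻¹) := by
      rw [← hωFFzbar z hz]
      exact eq_neg_of_add_eq_zero_right h0
    have hDB : wDzbar (fun w => (ωFF w)⁻¹) z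
        = -((ωFF z)⁻¹ * (Fp z * F z) * (ωFF z)⁻¹) := by
      calc wDzbar (fun w => (ωFF w)⁻¹) z
          = ((ωFF z)⁻¹ * ωFF z) * wDzbar (fun w => (ωFF w)⁻¹) z := by
            rw [Matrix.nonsing_inv_mul _ hunit_det, one_mul]
        _ = (ωFF z)⁻¹ * (ωFF z * wDzbar (fun w => (ωFF w)⁻¹) z) := by rw [mul_assoc]
        _ = -((ωFF z)⁻¹ * (Fp z * F z) * (ωFF z)⁻¹) := by rw [h1]; noncomm_ring
    have hDF : wDzbar F z = -(A z * F z) := eq_neg_of_add_eq_zero_left (hFsys z hz)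
    have hDΛ := hΛsys z hz
    have hmain : wDzbar (fun w => 1 - F w * (ωFF w)⁻¹ * Λ w) z
        = -((wDzbar F z * (ωFF z)⁻¹ + F z * wDzbar (fun w => (ωFF w)⁻¹) z) * Λ z
            + (F z * (ωFF z)⁻¹) * wDzbar Λ z) := by
      rw [wDzbar_one_sub hFBΛ, wDzbar_mul hFB (hΛ z hz), wDzbar_mul (hF z hz) hB]
    rw [hmain, hDB, hDF, hDΛ]
    noncomm_ring
  refine ⟨key, ?_⟩
  intro z hz hg
  have e := key z hz
  have hgdet : IsUnit (1 - F z * (ωFF z)⁻¹ * Λ z).det :=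
    (Matrix.isUnit_iff_isUnit_det _).mp hg
  have hginv : (1 - F z * (ωFF z)⁻¹ * Λ z) * (1 - F z * (ωFF z)⁻¹ * Λ z)⁻¹ = 1 :=
    Matrix.mul_nonsing_inv _ hgdet
  have e2 : (A z + F z * (ωFF z)⁻¹ * Fp z) * (1 - F z * (ωFF z)⁻¹ * Λ z)
      = (1 - F z * (ωFF z)⁻¹ * Λ z) * A z
        - wDzbar (fun w => 1 - F w * (ωFF w)⁻¹ * Λ w) z := by
    rw [← sub_eq_zero, ← e]; abel
  calc A z + F z * (ωFF z)⁻¹ * Fp z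
      = (A z + F z * (ωFF z)⁻¹ * Fp z)
          * ((1 - F z * (ωFF z)⁻¹ * Λ z) * (1 - F z * (ωFF z)⁻¹ * Λ z)⁻¹) := by
        rw [hginv, mul_one]
    _ = ((A z + F z * (ωFF z)⁻¹ * Fp z) * (1 - F z * (ωFF z)⁻¹ * Λ z))
          * (1 - F z * (ωFF z)⁻¹ * Λ z)⁻¹ := (mul_assoc _ _ _).symm
    _ = ((1 - F z * (ωFF z)⁻¹ * Λ z) * A z
          - wDzbar (fun w => 1 - F w * (ωFF w)⁻¹ * Λ w) z)
          * (1 - F z * (ωFF z)⁻¹ * Λ z)⁻¹ := by rw [e2]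
    _ = (1 - F z * (ωFF z)⁻¹ * Λ z) * A z * (1 - F z * (ωFF z)⁻¹ * Λ z)⁻¹
          - wDzbar (fun w => 1 - F w * (ωFF w)⁻¹ * Λ w) z
            * (1 - F z * (ωFF z)⁻¹ * Λ z)⁻¹ := by rw [sub_mul]
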